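/- Let (X_ℓ : ℓ ≥ 1) be independent and identically distributed nonnegative real random variables, let 0 < ν ≤ 1 and suppose c := E[X₁^ν] < 1. Then the random variable S = Σ_{k=0}^∞ Π_{ℓ=1}^{k} X_ℓ (empty product equal to 1) satisfies E[S^ν] ≤ Σ_{k=0}^∞ c^{k} = 1/(1 − c) < ∞. -/

import Mathlib

/-!
STATEMENT 2: If (X_ℓ) are i.i.d. nonnegative random variables, 0 < ν ≤ 1 and
c = E[X₁^ν] < 1, then S = Σ_{k=0}^∞ Π_{ℓ=1}^k X_ℓ satisfies
E[S^ν] ≤ Σ_{k=0}^∞ c^k = 1/(1 − c) < ∞.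
-/

open MeasureTheory ProbabilityTheory Filter
open scoped ENNReal

private lemma sum_rpow_le {ι : Type*} (s : Finset ι) (f : ι → ℝ≥0∞) {ν : ℝ}
    (hν0 : 0 < ν) (hν1 : ν ≤ 1) :
    (∑ i ∈ s, f i) ^ ν ≤ ∑ i ∈ s, f i ^ ν := by
  classical
  induction s using Finset.induction with
  | empty => simp [ENNReal.zero_rpow_of_pos hν0]
  | insert a s hi ih =>
      rw [Finset.sum_insert hi, Finset.sum_insert hi]
      exact le_trans (ENNReal.rpow_add_le_add_rpow _ _ hν0.le hν1) (add_le_add_right ih _)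

private lemma tsum_rpow_le (f : ℕ → ℝ≥0∞) {ν : ℝ} (hν0 : 0 < ν) (hν1 : ν ≤ 1) :
    (∑' k, f k) ^ ν ≤ ∑' k, f k ^ ν := by
  have h1 : Tendsto (fun n => (∑ i ∈ Finset.range n, f i) ^ ν) atTop
      (nhds ((∑' k, f k) ^ ν)) :=
    (ENNReal.continuous_rpow_const.tendsto _).comp (ENNReal.tendsto_nat_tsum f)
  refine le_of_tendsto h1 (Filter.Eventually.of_forall fun n => ?_)
  exact le_trans (sum_rpow_le _ f hν0 hν1)
    (ENNReal.sum_le_tsum (Finset.range n))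

theorem stmt_2
    {Ω : Type*} [MeasurableSpace Ω] (μ : Measure Ω) [IsProbabilityMeasure μ]
    (X : ℕ → Ω → ℝ)
    (hmeas : ∀ ℓ, Measurable (X ℓ))
    (hpos : ∀ ℓ ω, 0 ≤ X ℓ ω)
    (hindep : iIndepFun X μ)
    (hid : ∀ ℓ, μ.map (X ℓ) = μ.map (X 0))
    (ν : ℝ) (hν0 : 0 < ν) (hν1 : ν ≤ 1)
    (c : ℝ≥0∞) (hc : c = ∫⁻ ω, ENNReal.ofReal (X 0 ω) ^ ν ∂μ) (hc1 : c < 1)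
    (S : Ω → ℝ≥0∞)
    (hS : ∀ ω, S ω = ∑' k : ℕ, ∏ ℓ ∈ Finset.range k, ENNReal.ofReal (X ℓ ω)) :
    (∫⁻ ω, S ω ^ ν ∂μ) ≤ ∑' k : ℕ, c ^ k
      ∧ (∑' k : ℕ, c ^ k) = (1 - c)⁻¹
      ∧ (1 - c)⁻¹ < ⊤ := by
  -- the transformed random variables
  set g : ℕ → Ω → ℝ≥0∞ := fun ℓ ω => ENNReal.ofReal (X ℓ ω) ^ ν with hg
  have hφ : Measurable (fun x : ℝ => ENNReal.ofReal x ^ ν) :=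
    (ENNReal.continuous_rpow_const.measurable).comp ENNReal.measurable_ofReal
  have hgmeas : ∀ ℓ, Measurable (g ℓ) := fun ℓ => hφ.comp (hmeas ℓ)
  have hgindep : iIndepFun g μ :=
    hindep.comp (fun _ => fun x : ℝ => ENNReal.ofReal x ^ ν) fun _ => hφ
  -- each g ℓ has lintegral c
  have hgc : ∀ ℓ, (∫⁻ ω, g ℓ ω ∂μ) = c := by
    intro ℓ
    rw [hc]
    calc (∫⁻ ω, g ℓ ω ∂μ)
        = ∫⁻ x, ENNReal.ofReal x ^ ν ∂(μ.map (X ℓ)) :=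
          (lintegral_map hφ (hmeas ℓ)).symm
      _ = ∫⁻ x, ENNReal.ofReal x ^ ν ∂(μ.map (X 0)) := by rw [hid ℓ]
      _ = ∫⁻ ω, ENNReal.ofReal (X 0 ω) ^ ν ∂μ := lintegral_map hφ (hmeas 0)
  -- lintegral of products
  have hprod : ∀ k : ℕ, (∫⁻ ω, ∏ ℓ ∈ Finset.range k, g ℓ ω ∂μ) = c ^ k := by
    intro k
    induction k with
    | zero => simp
    | succ k ih =>
        have hind : IndepFun (∏ j ∈ Finset.range k, g j) (g k) μ :=
          hgindep.indepFun_prod_range_succ hgmeas k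
        have hmp : Measurable (∏ j ∈ Finset.range k, g j) := by
          simp only [Finset.prod_fn]
          exact Finset.measurable_prod _ fun j _ => hgmeas j
        calc (∫⁻ ω, ∏ ℓ ∈ Finset.range (k + 1), g ℓ ω ∂μ)
            = ∫⁻ ω, (∏ j ∈ Finset.range k, g j) ω * g k ω ∂μ := by
              simp [Finset.prod_range_succ]
          _ = (∫⁻ ω, (∏ j ∈ Finset.range k, g j) ω ∂μ) * ∫⁻ ω, g k ω ∂μ :=
              lintegral_mul_eq_lintegral_mul_lintegral_of_indepFun hmp (hgmeas k) hind
          _ = c ^ k * c := by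
              rw [hgc k, ← ih]
              congr 1
              exact lintegral_congr fun ω => by simp [Finset.prod_apply]
          _ = c ^ (k + 1) := by ring
  have hmain : (∫⁻ ω, S ω ^ ν ∂μ) ≤ ∑' k : ℕ, c ^ k := by
    calc (∫⁻ ω, S ω ^ ν ∂μ)
        ≤ ∫⁻ ω, ∑' k : ℕ, (∏ ℓ ∈ Finset.range k, ENNReal.ofReal (X ℓ ω)) ^ ν ∂μ := by
          refine lintegral_mono fun ω => ?_
          rw [hS ω]
          exact tsum_rpow_le _ hν0 hν1
      _ = ∑' k : ℕ, ∫⁻ ω, (∏ ℓ ∈ Finset.range k, ENNReal.ofReal (X ℓ ω)) ^ ν ∂μ := by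
          refine lintegral_tsum fun k => ?_
          exact (ENNReal.continuous_rpow_const.measurable.comp
            (Finset.measurable_prod _ fun ℓ _ =>
              ENNReal.measurable_ofReal.comp (hmeas ℓ))).aemeasurable
      _ = ∑' k : ℕ, c ^ k := by
          refine tsum_congr fun k => ?_
          rw [← hprod k]
          refine lintegral_congr fun ω => ?_
          rw [ENNReal.prod_rpow_of_nonneg hν0.le]
  refine ⟨hmain, ENNReal.tsum_geometric c, ?_⟩
  rw [ENNReal.inv_lt_top]
  exact tsub_pos_of_lt hc1
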